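/- Let R, S be commutative rings with R an integral domain of the form R = A ⊗ B for k-algebras A, B (all k-algebras over a field k), let f ∈ B be a non-zero-divisor, and let F ∈ A ⊗ B_f (localization in the second factor). Suppose F can be written so that for a set X' of k-algebra homomorphisms A → k whose common kernel contains no nonzero element of the span of the A-components of F, each specialization of F at x ∈ X' lies in B ⊆ B_f. Then F ∈ A ⊗ B. -/

import Mathlib

/-!
STATEMENT 3: Let `k` be a field, `A`, `B` commutative `k`-algebras with `A ⊗[k] B` an
integral domain, `f ∈ B` a non-zero-divisor and `B_f` the localization of `B` away from `f`.
Let `F = Σᵢ aᵢ ⊗ bᵢ ∈ A ⊗[k] B_f`.  Suppose `X'` is a set of `k`-algebra homomorphisms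
`A → k` separating the span of the `aᵢ` (no nonzero element of the span is killed by all
of `X'`), and suppose that every specialization `Σᵢ x(aᵢ) • bᵢ` (`x ∈ X'`) lies in the
image of `B` in `B_f`.  Then `F` lies in the image of `A ⊗[k] B` in `A ⊗[k] B_f`.
-/

open scoped TensorProduct

theorem stmt_3 (k A B Bf : Type*) [Field k] [CommRing A] [CommRing B] [CommRing Bf]
    [Algebra k A] [Algebra k B] [Algebra k Bf] [Algebra B Bf] [IsScalarTower k B Bf]
    [IsDomain (A ⊗[k] B)]
    (f : B) (hf : f ∈ nonZeroDivisors B) [IsLocalization.Away f Bf]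
    (n : ℕ) (a : Fin n → A) (b : Fin n → Bf)
    (X' : Set (A →ₐ[k] k))
    (hsep : ∀ a' ∈ Submodule.span k (Set.range a), (∀ x ∈ X', x a' = 0) → a' = 0)
    (hspec : ∀ x ∈ X', (∑ i, x (a i) • b i) ∈ (algebraMap B Bf).range) :
    (∑ i, a i ⊗ₜ[k] b i) ∈
      (Algebra.TensorProduct.map (AlgHom.id k A) (IsScalarTower.toAlgHom k B Bf)).range := by
  classical
  set V : Submodule k A := Submodule.span k (Set.range a) with hV
  have : FiniteDimensional k V := FiniteDimensional.span_of_finite k (Set.finite_range a)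
  set m := Module.finrank k V with hm
  let e : Module.Basis (Fin m) k V := Module.finBasis k V
  have ha : ∀ i, a i ∈ V := fun i => Submodule.subset_span ⟨i, rfl⟩
  let av : Fin n → V := fun i => ⟨a i, ha i⟩
  let M : Fin n → Fin m → k := fun i j => e.repr (av i) j
  have haM : ∀ i, a i = ∑ j, M i j • (e j : A) := by
    intro i
    have h := e.sum_repr (av i)
    have := congrArg (Submodule.subtype V) h
    simp only [map_sum, map_smul, Submodule.subtype_apply] at this
    exact this.symm
  let c : Fin m → Bf := fun j => ∑ i, M i j • b i
  -- restrictions of the homomorphisms to V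
  let res : (A →ₐ[k] k) → Module.Dual k V := fun x => x.toLinearMap ∘ₗ V.subtype
  let W : Submodule k (Module.Dual k V) := Submodule.span k (res '' X')
  have hW : W = ⊤ := by
    have hco : W.dualCoannihilator = ⊥ := by
      rw [eq_bot_iff]
      intro v hv
      rw [Submodule.mem_dualCoannihilator] at hv
      have hv0 : (v : A) = 0 :=
        hsep v v.2 (fun x hx => hv (res x) (Submodule.subset_span ⟨x, hx, rfl⟩))
      simpa [Submodule.mem_bot] using Subtype.ext hv0
    have h1 := Subspace.finrank_add_finrank_dualCoannihilator_eq W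
    rw [hco, finrank_bot] at h1
    apply Submodule.eq_top_of_finrank_eq
    rw [Subspace.dual_finrank_eq]
    omega
  -- the image of B, as a k-submodule of Bf
  set R : Submodule k Bf := LinearMap.range ((IsScalarTower.toAlgHom k B Bf).toLinearMap)
    with hR
  -- linear map collecting the specializations
  let g : Module.Dual k V →ₗ[k] Bf :=
    { toFun := fun φ => ∑ j, φ (e j) • c j
      map_add' := by intro φ ψ; simp [add_smul, Finset.sum_add_distrib]
      map_smul' := by intro r φ; simp [mul_smul, Finset.smul_sum] }
  let T : Module.Dual k V →ₗ[k] (Bf ⧸ R) := R.mkQ ∘ₗ g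
  have hTres : ∀ x ∈ X', T (res x) = 0 := by
    intro x hx
    have hg : g (res x) = ∑ i, x (a i) • b i := by
      have hx' : ∀ i, x (a i) = ∑ j, M i j * x (e j : A) := by
        intro i
        rw [haM i]
        simp [map_sum, smul_eq_mul]
      calc g (res x) = ∑ j, x (e j : A) • c j := rfl
        _ = ∑ j, ∑ i, (M i j * x (e j : A)) • b i := by
            simp [c, Finset.smul_sum, smul_smul, mul_comm]
        _ = ∑ i, ∑ j, (M i j * x (e j : A)) • b i := Finset.sum_comm
        _ = ∑ i, x (a i) • b i := by
            refine Finset.sum_congr rfl fun i _ => ?_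
            rw [hx' i, Finset.sum_smul]
    have hmem : g (res x) ∈ R := by
      rw [hg]
      obtain ⟨d, hd⟩ := hspec x hx
      exact ⟨d, hd⟩
    simpa [T, Submodule.Quotient.mk_eq_zero] using (Submodule.Quotient.mk_eq_zero R).mpr hmem
  have hT : T = 0 := by
    have hle : W ≤ LinearMap.ker T := by
      rw [Submodule.span_le]
      rintro _ ⟨x, hx, rfl⟩
      exact hTres x hx
    rw [hW] at hle
    ext φ
    exact hle (Submodule.mem_top)
  have hcj : ∀ j, c j ∈ R := by
    intro j
    have h0 : T (e.coord j) = 0 := by rw [hT]; rfl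
    have hc : g (e.coord j) = c j := by
      show (∑ j', e.coord j (e j') • c j') = c j
      rw [Finset.sum_eq_single j]
      · simp
      · intro j' _ hne
        simp [Module.Basis.coord_apply, Module.Basis.repr_self_apply, hne]
      · simp
    have := (Submodule.Quotient.mk_eq_zero R).mp (by simpa [T, hc] using h0)
    exact this
  -- rewrite the tensor and conclude
  have hF : (∑ i, a i ⊗ₜ[k] b i) = ∑ j, ((e j : A) ⊗ₜ[k] c j) := by
    calc (∑ i, a i ⊗ₜ[k] b i)
        = ∑ i, ∑ j, (e j : A) ⊗ₜ[k] (M i j • b i) := by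
          refine Finset.sum_congr rfl fun i _ => ?_
          rw [haM i, TensorProduct.sum_tmul]
          refine Finset.sum_congr rfl fun j _ => ?_
          rw [TensorProduct.smul_tmul]
      _ = ∑ j, ∑ i, (e j : A) ⊗ₜ[k] (M i j • b i) := Finset.sum_comm
      _ = ∑ j, ((e j : A) ⊗ₜ[k] c j) := by
          refine Finset.sum_congr rfl fun j _ => ?_
          rw [← TensorProduct.tmul_sum]
  rw [hF]
  apply Subalgebra.sum_mem
  intro j _
  obtain ⟨d, hd⟩ := hcj j
  refine ⟨(e j : A) ⊗ₜ[k] d, ?_⟩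
  show (Algebra.TensorProduct.map (AlgHom.id k A) (IsScalarTower.toAlgHom k B Bf))
      ((e j : A) ⊗ₜ[k] d) = _
  rw [Algebra.TensorProduct.map_tmul]
  simp only [AlgHom.coe_id, id_eq]
  congr 1
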